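/- Let d ≥ 4 be even, q an odd prime power, and S_a = {m ∈ F_q^d : m_1²/a_1 + ⋯ + m_d²/a_d = 0} with all a_j nonzero. Then for any finite subset E ⊂ F_q^d, Σ_{m ∈ S_a} |Σ_{x∈E} χ(−m·x)|² ≤ C (q^{d-1} |E| + q^{d/2} |E|²) for an absolute constant C. -/

import Mathlib

open Finset

def quadSurf {F : Type} [Field F] [Fintype F] [DecidableEq F] {d : ℕ}
    (a : Fin d → F) : Finset (Fin d → F) :=
  Finset.univ.filter (fun x => ∑ i, a i * x i ^ 2 = 0)

def dualSurf {F : Type} [Field F] [Fintype F] [DecidableEq F] {d : ℕ}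
    (a : Fin d → F) : Finset (Fin d → F) :=
  Finset.univ.filter (fun m => ∑ i, m i ^ 2 * (a i)⁻¹ = 0)

noncomputable def gSum {F : Type} [Field F] [Fintype F] [DecidableEq F]
    (χ : AddChar F ℂ) : ℂ :=
  ∑ s ∈ Finset.univ.erase (0 : F), ((quadraticChar F s : ℤ) : ℂ) * χ s

noncomputable def sigmaInv {F : Type} [Field F] [Fintype F] [DecidableEq F]
    (χ : AddChar F ℂ) {d : ℕ} (a : Fin d → F) (m : Fin d → F) : ℂ :=
  ((quadSurf a).card : ℂ)⁻¹ * ∑ x ∈ quadSurf a, χ (∑ i, m i * x i)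

noncomputable def brKernel {F : Type} [Field F] [Fintype F] [DecidableEq F]
    (χ : AddChar F ℂ) {d : ℕ} (a : Fin d → F) (m : Fin d → F) : ℂ :=
  if m = 0 then 0 else sigmaInv χ a m

noncomputable def brKernelHat {F : Type} [Field F] [Fintype F] [DecidableEq F]
    (χ : AddChar F ℂ) {d : ℕ} (a : Fin d → F) (x : Fin d → F) : ℂ :=
  ∑ m : Fin d → F, brKernel χ a m * χ (-(∑ i, m i * x i))

noncomputable def convInd {F : Type} [Field F] [Fintype F] [DecidableEq F]
    (χ : AddChar F ℂ) {d : ℕ} (a : Fin d → F) (E : Finset (Fin d → F))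
    (x : Fin d → F) : ℂ :=
  ((Fintype.card F : ℂ) ^ d)⁻¹ *
    ∑ y : Fin d → F, (if x - y ∈ E then brKernelHat χ a y else 0)

noncomputable def convSig {F : Type} [Field F] [Fintype F] [DecidableEq F]
    {d : ℕ} (a : Fin d → F) (f : (Fin d → F) → ℂ) (x : Fin d → F) : ℂ :=
  ((quadSurf a).card : ℂ)⁻¹ * ∑ y ∈ quadSurf a, f (x - y)

noncomputable def Lnorm {α : Type} [Fintype α] (r : ℝ) (g : α → ℂ) : ℝ :=
  ((Fintype.card α : ℝ)⁻¹ * ∑ x : α, ‖g x‖ ^ r) ^ (1 / r)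

set_option linter.unusedSectionVars false

section Aux
variable {F : Type} [Field F] [Fintype F] [DecidableEq F]

private lemma char_map_sum (ψ : AddChar F ℂ) {ι : Type} (s : Finset ι) (f : ι → F) :
    ψ (∑ i ∈ s, f i) = ∏ i ∈ s, ψ (f i) := by
  classical
  induction s using Finset.cons_induction with
  | empty => simp
  | cons a s ha ih => rw [Finset.sum_cons, Finset.prod_cons, AddChar.map_add_eq_mul, ih]

private lemma sum_char_linear (χ : AddChar F ℂ) (hχ : χ ≠ 1) {b : F} (hb : b ≠ 0) :
    ∑ u : F, χ (b * u) = 0 := by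
  have h : χ.mulShift b ≠ 1 :=
    fun h => hχ ((AddChar.mulShift_unit_eq_one_iff _ (isUnit_iff_ne_zero.mpr hb)).mp h)
  simpa using AddChar.sum_eq_zero_of_ne_one h

private lemma sum_char_indicator (χ : AddChar F ℂ) (hχ : χ ≠ 1) (s : F) :
    ∑ t : F, χ (t * s) = if s = 0 then ((Fintype.card F : ℕ) : ℂ) else 0 := by
  rcases eq_or_ne s 0 with h | h
  · simp [h]
  · simp only [h, if_false]
    calc ∑ t : F, χ (t * s) = ∑ t : F, χ (s * t) := by simp [mul_comm]
      _ = 0 := sum_char_linear χ hχ h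

private lemma two_ne_zero_of_odd_card (hq : Odd (Fintype.card F)) : (2 : F) ≠ 0 := by
  have hchar : ringChar F ≠ 2 := by
    intro h
    have h2 := FiniteField.even_card_of_char_two h
    rcases hq with ⟨k, hk⟩
    omega
  exact Ring.two_ne_zero hchar

private lemma quad_sum_mul_conj (hq : Odd (Fintype.card F)) (χ : AddChar F ℂ) (hχ : χ ≠ 1)
    {c : F} (hc : c ≠ 0) (b : F) :
    (∑ u : F, χ (c * u ^ 2 + b * u)) * (starRingEnd ℂ) (∑ u : F, χ (c * u ^ 2 + b * u))
      = ((Fintype.card F : ℕ) : ℂ) := by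
  have h2 : (2 : F) ≠ 0 := two_ne_zero_of_odd_card hq
  have hconj : (starRingEnd ℂ) (∑ u : F, χ (c * u ^ 2 + b * u))
      = ∑ v : F, χ (-(c * v ^ 2 + b * v)) := by
    rw [map_sum]
    exact Finset.sum_congr rfl fun v _ => (AddChar.map_neg_eq_conj χ _).symm
  calc (∑ u : F, χ (c * u ^ 2 + b * u)) * (starRingEnd ℂ) (∑ u : F, χ (c * u ^ 2 + b * u))
      = ∑ v : F, ∑ u : F, χ ((c * u ^ 2 + b * u) + -(c * v ^ 2 + b * v)) := by
        rw [hconj, Finset.sum_mul_sum, Finset.sum_comm]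
        exact Finset.sum_congr rfl fun v _ => Finset.sum_congr rfl fun u _ =>
          (AddChar.map_add_eq_mul χ _ _).symm
    _ = ∑ v : F, ∑ w : F, χ ((c * w ^ 2 + b * w) + (2 * c * w) * v) := by
        refine Finset.sum_congr rfl fun v _ => ?_
        rw [← Equiv.sum_comp (Equiv.addLeft v)
          (fun u => χ ((c * u ^ 2 + b * u) + -(c * v ^ 2 + b * v)))]
        refine Finset.sum_congr rfl fun w _ => ?_
        congr 1
        simp only [Equiv.coe_addLeft]
        ring
    _ = ∑ w : F, χ (c * w ^ 2 + b * w) * ∑ v : F, χ ((2 * c * w) * v) := by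
        rw [Finset.sum_comm]
        refine Finset.sum_congr rfl fun w _ => ?_
        rw [Finset.mul_sum]
        exact Finset.sum_congr rfl fun v _ => AddChar.map_add_eq_mul χ _ _
    _ = ((Fintype.card F : ℕ) : ℂ) := by
        have hz : ∀ w : F, (∑ v : F, χ ((2 * c * w) * v))
            = if w = 0 then ((Fintype.card F : ℕ) : ℂ) else 0 := by
          intro w
          rcases eq_or_ne w 0 with h | h
          · simp [h]
          · simp only [h, if_false]
            exact sum_char_linear χ hχ (mul_ne_zero (mul_ne_zero h2 hc) h)
        calc ∑ w : F, χ (c * w ^ 2 + b * w) * ∑ v : F, χ ((2 * c * w) * v)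
            = ∑ w : F, if w = 0 then χ (c * w ^ 2 + b * w) * ((Fintype.card F : ℕ) : ℂ)
                else 0 := by
              refine Finset.sum_congr rfl fun w _ => ?_
              rw [hz w]
              split <;> simp
          _ = ((Fintype.card F : ℕ) : ℂ) := by simp

private lemma abs_quad_sum (hq : Odd (Fintype.card F)) (χ : AddChar F ℂ) (hχ : χ ≠ 1)
    {c : F} (hc : c ≠ 0) (b : F) :
    ‖∑ u : F, χ (c * u ^ 2 + b * u)‖ = Real.sqrt (Fintype.card F) := by
  have h := quad_sum_mul_conj hq χ hχ hc b
  have h2 : ‖∑ u : F, χ (c * u ^ 2 + b * u)‖ ^ 2 = (Fintype.card F : ℝ) := by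
    rw [Complex.sq_norm]
    have := congrArg Complex.re h
    rwa [Complex.mul_conj, Complex.ofReal_re] at this
    
  rw [← h2, Real.sqrt_sq (norm_nonneg _)]

private lemma sum_pi_char {d : ℕ} (χ : AddChar F ℂ) (g : Fin d → F → F) :
    ∑ m : Fin d → F, χ (∑ i, g i (m i)) = ∏ i, ∑ u : F, χ (g i u) := by
  rw [Finset.prod_univ_sum, Fintype.piFinset_univ]
  exact Finset.sum_congr rfl fun m _ => char_map_sum χ univ fun i => g i (m i)

private lemma abs_gauss_pi {d : ℕ} (hq : Odd (Fintype.card F)) (χ : AddChar F ℂ) (hχ : χ ≠ 1)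
    (hd2 : Even d) {t : F} (ht : t ≠ 0) (a : Fin d → F) (ha : ∀ i, a i ≠ 0) (z : Fin d → F) :
    ‖∑ m : Fin d → F, χ (∑ i, (t * (a i)⁻¹ * (m i) ^ 2 + z i * m i))‖
      = (Fintype.card F : ℝ) ^ (d / 2) := by
  rw [sum_pi_char χ (fun i u => t * (a i)⁻¹ * u ^ 2 + z i * u), norm_prod]
  have hfac : ∀ i : Fin d, ‖∑ u : F, χ (t * (a i)⁻¹ * u ^ 2 + z i * u)‖
      = Real.sqrt (Fintype.card F) := fun i =>
    abs_quad_sum hq χ hχ (mul_ne_zero ht (inv_ne_zero (ha i))) (z i)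
  rw [Finset.prod_congr rfl fun i _ => hfac i, Finset.prod_const, Finset.card_univ,
    Fintype.card_fin]
  obtain ⟨k, hk⟩ := hd2
  have hdk : d / 2 = k := by omega
  rw [hdk, hk, pow_add, ← mul_pow, Real.mul_self_sqrt (by positivity)]

private lemma sum_char_dot_eq_zero {d : ℕ} (χ : AddChar F ℂ) (hχ : χ ≠ 1)
    {z : Fin d → F} (hz : z ≠ 0) :
    ∑ m : Fin d → F, χ (∑ i, z i * m i) = 0 := by
  rw [sum_pi_char χ (fun i u => z i * u)]
  obtain ⟨i, hi⟩ : ∃ i, z i ≠ 0 := by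
    by_contra h
    push_neg at h
    exact hz (funext h)
  exact Finset.prod_eq_zero (Finset.mem_univ i) (sum_char_linear χ hχ hi)

private lemma qT_eq {d : ℕ} (χ : AddChar F ℂ) (hχ : χ ≠ 1) (a : Fin d → F) (z : Fin d → F) :
    ((Fintype.card F : ℕ) : ℂ) * ∑ m ∈ dualSurf a, χ (∑ i, z i * m i)
      = ∑ t : F, ∑ m : Fin d → F, χ (∑ i, (t * (a i)⁻¹ * (m i) ^ 2 + z i * m i)) := by
  symm
  calc ∑ t : F, ∑ m : Fin d → F, χ (∑ i, (t * (a i)⁻¹ * (m i) ^ 2 + z i * m i))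
      = ∑ m : Fin d → F, ∑ t : F, χ (∑ i, (t * (a i)⁻¹ * (m i) ^ 2 + z i * m i)) :=
        Finset.sum_comm
    _ = ∑ m : Fin d → F,
          (if (∑ i, (m i) ^ 2 * (a i)⁻¹) = 0 then ((Fintype.card F : ℕ) : ℂ) else 0)
            * χ (∑ i, z i * m i) := by
        refine Finset.sum_congr rfl fun m _ => ?_
        rw [← sum_char_indicator χ hχ (∑ i, (m i) ^ 2 * (a i)⁻¹), Finset.sum_mul]
        refine Finset.sum_congr rfl fun t _ => ?_
        rw [← AddChar.map_add_eq_mul]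
        congr 1
        rw [Finset.sum_add_distrib, Finset.mul_sum]
        congr 1
        exact Finset.sum_congr rfl fun i _ => by ring
    _ = ((Fintype.card F : ℕ) : ℂ) * ∑ m ∈ dualSurf a, χ (∑ i, z i * m i) := by
        rw [dualSurf, Finset.sum_filter, Finset.mul_sum]
        refine Finset.sum_congr rfl fun m _ => ?_
        split <;> simp

private lemma sum_if_bound (A B : ℝ) (hB : 0 ≤ B) :
    ∑ t : F, ((if t = (0 : F) then A else 0) + B) ≤ A + (Fintype.card F : ℝ) * B := by
  rw [Finset.sum_add_distrib, Finset.sum_ite_eq' univ (0 : F) (fun _ => A),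
    if_pos (Finset.mem_univ _), Finset.sum_const, Finset.card_univ, nsmul_eq_mul]

private lemma T_bound_ne {d : ℕ} (hq : Odd (Fintype.card F)) (χ : AddChar F ℂ) (hχ : χ ≠ 1)
    (hd2 : Even d) (a : Fin d → F) (ha : ∀ i, a i ≠ 0) {z : Fin d → F} (hz : z ≠ 0) :
    ‖∑ m ∈ dualSurf a, χ (∑ i, z i * m i)‖
      ≤ (Fintype.card F : ℝ) ^ (d / 2) := by
  have hq0 : (0 : ℝ) < (Fintype.card F : ℝ) := by
    exact_mod_cast Fintype.card_pos
  have key := qT_eq χ hχ a z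
  have habs : (Fintype.card F : ℝ) * ‖∑ m ∈ dualSurf a, χ (∑ i, z i * m i)‖
      ≤ (Fintype.card F : ℝ) * (Fintype.card F : ℝ) ^ (d / 2) := by
    have h1 : (Fintype.card F : ℝ) * ‖∑ m ∈ dualSurf a, χ (∑ i, z i * m i)‖
        = ‖((Fintype.card F : ℕ) : ℂ)
            * ∑ m ∈ dualSurf a, χ (∑ i, z i * m i)‖ := by
      rw [norm_mul, Complex.norm_natCast]
    rw [h1, key]
    calc ‖∑ t : F, ∑ m : Fin d → F,
            χ (∑ i, (t * (a i)⁻¹ * (m i) ^ 2 + z i * m i))‖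
        ≤ ∑ t : F, ‖∑ m : Fin d → F,
            χ (∑ i, (t * (a i)⁻¹ * (m i) ^ 2 + z i * m i))‖ := norm_sum_le _ _
      _ ≤ ∑ t : F, ((if t = (0 : F) then (0:ℝ) else 0) + (Fintype.card F : ℝ) ^ (d / 2)) := by
          refine Finset.sum_le_sum fun t _ => ?_
          rcases eq_or_ne t 0 with h | h
          · subst h
            have : ∑ m : Fin d → F, χ (∑ i, ((0:F) * (a i)⁻¹ * (m i) ^ 2 + z i * m i))
                = ∑ m : Fin d → F, χ (∑ i, z i * m i) := by
              refine Finset.sum_congr rfl fun m _ => ?_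
              congr 1
              exact Finset.sum_congr rfl fun i _ => by ring
            rw [this, sum_char_dot_eq_zero χ hχ hz]
            simp [le_of_lt (pow_pos hq0 _)]
          · rw [abs_gauss_pi hq χ hχ hd2 h a ha z, if_neg h, zero_add]
      _ ≤ 0 + (Fintype.card F : ℝ) * (Fintype.card F : ℝ) ^ (d / 2) :=
          sum_if_bound 0 _ (le_of_lt (pow_pos hq0 _))
      _ = (Fintype.card F : ℝ) * (Fintype.card F : ℝ) ^ (d / 2) := by ring
  exact le_of_mul_le_mul_left habs hq0

private lemma card_dualSurf_le {d : ℕ} (hq : Odd (Fintype.card F)) (χ : AddChar F ℂ)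
    (hχ : χ ≠ 1) (hd2 : Even d) (hd4 : 4 ≤ d) (a : Fin d → F) (ha : ∀ i, a i ≠ 0) :
    (((dualSurf a).card : ℝ)) ≤ 2 * (Fintype.card F : ℝ) ^ (d - 1) := by
  have hq0 : (0 : ℝ) < (Fintype.card F : ℝ) := by exact_mod_cast Fintype.card_pos
  have hq1 : (1 : ℝ) ≤ (Fintype.card F : ℝ) := by exact_mod_cast Fintype.card_pos
  have key := qT_eq χ hχ a (0 : Fin d → F)
  have hT0 : ∑ m ∈ dualSurf a, χ (∑ i, (0 : Fin d → F) i * m i)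
      = (((dualSurf a).card : ℕ) : ℂ) := by
    have h1 : ∀ m ∈ dualSurf a, χ (∑ i, (0 : Fin d → F) i * m i) = 1 := fun m _ => by simp
    rw [Finset.sum_congr rfl h1, Finset.sum_const, nsmul_eq_mul, mul_one]
  have habs : (Fintype.card F : ℝ) * ((dualSurf a).card : ℝ)
      ≤ (Fintype.card F : ℝ) ^ d
        + (Fintype.card F : ℝ) * (Fintype.card F : ℝ) ^ (d / 2) := by
    have h1 : (Fintype.card F : ℝ) * ((dualSurf a).card : ℝ)
        = ‖((Fintype.card F : ℕ) : ℂ)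
            * ∑ m ∈ dualSurf a, χ (∑ i, (0 : Fin d → F) i * m i)‖ := by
      rw [hT0, norm_mul, Complex.norm_natCast, Complex.norm_natCast]
    rw [h1, key]
    calc ‖∑ t : F, ∑ m : Fin d → F,
            χ (∑ i, (t * (a i)⁻¹ * (m i) ^ 2 + (0 : Fin d → F) i * m i))‖
        ≤ ∑ t : F, ‖∑ m : Fin d → F,
            χ (∑ i, (t * (a i)⁻¹ * (m i) ^ 2 + (0 : Fin d → F) i * m i))‖ :=
          norm_sum_le _ _
      _ ≤ ∑ t : F, ((if t = (0 : F) then ((Fintype.card F : ℝ) ^ d) else 0)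
            + (Fintype.card F : ℝ) ^ (d / 2)) := by
          refine Finset.sum_le_sum fun t _ => ?_
          rcases eq_or_ne t 0 with h | h
          · subst h
            have : ∑ m : Fin d → F,
                χ (∑ i, ((0:F) * (a i)⁻¹ * (m i) ^ 2 + (0 : Fin d → F) i * m i))
                = ∑ m : Fin d → F, (1 : ℂ) := by
              refine Finset.sum_congr rfl fun m _ => ?_
              have : (∑ i, ((0:F) * (a i)⁻¹ * (m i) ^ 2 + (0 : Fin d → F) i * m i)) = 0 := by
                refine Finset.sum_eq_zero fun i _ => by simp
              rw [this, AddChar.map_zero_eq_one]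
            rw [this]
            simp [le_of_lt (pow_pos hq0 _)]
          · rw [abs_gauss_pi hq χ hχ hd2 h a ha 0, if_neg h, zero_add]
      _ ≤ (Fintype.card F : ℝ) ^ d
            + (Fintype.card F : ℝ) * (Fintype.card F : ℝ) ^ (d / 2) :=
          sum_if_bound _ _ (le_of_lt (pow_pos hq0 _))
  have hpow : (Fintype.card F : ℝ) ^ d
      = (Fintype.card F : ℝ) * (Fintype.card F : ℝ) ^ (d - 1) := by
    rw [← pow_succ']
    congr 1
    omega
  have hhalf : (Fintype.card F : ℝ) ^ (d / 2) ≤ (Fintype.card F : ℝ) ^ (d - 1) :=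
    pow_le_pow_right₀ hq1 (by omega)
  rw [hpow] at habs
  nlinarith [pow_pos hq0 (d - 1)]


end Aux

/-- Incidence bound: ∑_{m ∈ S_a} |∑_{x∈E} χ(-m·x)|² ≤ C (q^{d-1}|E| + q^{d/2}|E|²)
for an absolute constant C, where S_a is the dual diagonal quadratic surface. -/
theorem dualSurf_energy_bound :
    ∃ C : ℝ, 0 < C ∧
      ∀ (F : Type) [Field F] [Fintype F] [DecidableEq F],
        Odd (Fintype.card F) →
        ∀ (χ : AddChar F ℂ), χ ≠ 1 →
        ∀ (d : ℕ), 4 ≤ d → Even d →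
        ∀ (a : Fin d → F), (∀ i, a i ≠ 0) →
        ∀ (E : Finset (Fin d → F)),
          ∑ m ∈ dualSurf a,
              (‖∑ x ∈ E, χ (-(∑ i, m i * x i))‖) ^ 2
            ≤ C * ((Fintype.card F : ℝ) ^ (d - 1) * (E.card : ℝ)
                + (Fintype.card F : ℝ) ^ (d / 2) * (E.card : ℝ) ^ 2) := by
  refine ⟨2, by norm_num, ?_⟩
  intro F _ _ _ hq χ hχ d hd4 hd2 a ha E
  have hq0 : (0 : ℝ) < (Fintype.card F : ℝ) := by exact_mod_cast Fintype.card_pos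
  set q : ℝ := (Fintype.card F : ℝ) with hqdef
  -- Step 1: rewrite the energy as the absolute value of a complex sum
  have h1 : ∑ m ∈ dualSurf a, (‖∑ x ∈ E, χ (-(∑ i, m i * x i))‖) ^ 2
      = ‖∑ m ∈ dualSurf a,
          (∑ x ∈ E, χ (-(∑ i, m i * x i)))
            * (starRingEnd ℂ) (∑ x ∈ E, χ (-(∑ i, m i * x i)))‖ := by
    have h : ∑ m ∈ dualSurf a,
        (∑ x ∈ E, χ (-(∑ i, m i * x i)))
          * (starRingEnd ℂ) (∑ x ∈ E, χ (-(∑ i, m i * x i)))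
        = (((∑ m ∈ dualSurf a,
            (‖∑ x ∈ E, χ (-(∑ i, m i * x i))‖) ^ 2 : ℝ)) : ℂ) := by
      push_cast
      refine Finset.sum_congr rfl fun m _ => ?_
      rw [Complex.mul_conj]
      norm_cast
      exact (Complex.sq_norm _).symm
    rw [h, Complex.norm_real, Real.norm_eq_abs, abs_of_nonneg (by positivity)]
  -- Step 2: expand the square
  have h2 : ∑ m ∈ dualSurf a,
      (∑ x ∈ E, χ (-(∑ i, m i * x i)))
        * (starRingEnd ℂ) (∑ x ∈ E, χ (-(∑ i, m i * x i)))
      = ∑ x ∈ E, ∑ y ∈ E, ∑ m ∈ dualSurf a, χ (∑ i, (y - x) i * m i) := by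
    have hc : ∀ s : F, (starRingEnd ℂ) (χ (-s)) = χ s := fun s => by
      rw [AddChar.map_neg_eq_conj, Complex.conj_conj]
    calc ∑ m ∈ dualSurf a,
        (∑ x ∈ E, χ (-(∑ i, m i * x i)))
          * (starRingEnd ℂ) (∑ x ∈ E, χ (-(∑ i, m i * x i)))
        = ∑ m ∈ dualSurf a, ∑ x ∈ E, ∑ y ∈ E, χ (∑ i, (y - x) i * m i) := by
          refine Finset.sum_congr rfl fun m _ => ?_
          have hconj : (starRingEnd ℂ) (∑ y ∈ E, χ (-(∑ i, m i * y i)))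
              = ∑ y ∈ E, χ (∑ i, m i * y i) := by
            rw [map_sum]
            exact Finset.sum_congr rfl fun y _ => hc _
          rw [hconj, Finset.sum_mul_sum]
          refine Finset.sum_congr rfl fun x _ => Finset.sum_congr rfl fun y _ => ?_
          rw [← AddChar.map_add_eq_mul]
          congr 1
          rw [neg_add_eq_sub, ← Finset.sum_sub_distrib]
          exact Finset.sum_congr rfl fun i _ => by rw [Pi.sub_apply]; ring
      _ = ∑ x ∈ E, ∑ y ∈ E, ∑ m ∈ dualSurf a, χ (∑ i, (y - x) i * m i) := by
          rw [Finset.sum_comm]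
          exact Finset.sum_congr rfl fun x _ => Finset.sum_comm
  rw [h1, h2]
  -- Step 3: bound the double sum
  calc ‖∑ x ∈ E, ∑ y ∈ E, ∑ m ∈ dualSurf a, χ (∑ i, (y - x) i * m i)‖
      ≤ ∑ x ∈ E, ∑ y ∈ E,
          ‖∑ m ∈ dualSurf a, χ (∑ i, (y - x) i * m i)‖ := by
        refine le_trans (norm_sum_le _ _) (Finset.sum_le_sum fun x _ => ?_)
        exact norm_sum_le _ _
    _ ≤ ∑ x ∈ E, ∑ y ∈ E, ((if x = y then 2 * q ^ (d - 1) else 0) + q ^ (d / 2)) := by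
        refine Finset.sum_le_sum fun x _ => Finset.sum_le_sum fun y _ => ?_
        rcases eq_or_ne x y with h | h
        · subst h
          have hz : ∀ m : Fin d → F, χ (∑ i, (x - x) i * m i) = 1 := fun m => by simp
          rw [Finset.sum_congr rfl fun m _ => hz m, Finset.sum_const, nsmul_eq_mul, mul_one,
            Complex.norm_natCast, if_pos rfl]
          have := card_dualSurf_le hq χ hχ hd2 hd4 a ha
          have hpos : (0:ℝ) ≤ q ^ (d / 2) := le_of_lt (pow_pos hq0 _)
          linarith
        · have hz : y - x ≠ 0 := sub_ne_zero_of_ne (Ne.symm h)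
          have := T_bound_ne hq χ hχ hd2 a ha hz
          simp only [if_neg h, zero_add]
          exact this
    _ = 2 * q ^ (d - 1) * (E.card : ℝ) + q ^ (d / 2) * (E.card : ℝ) ^ 2 := by
        have hrow : ∀ x ∈ E, ∑ y ∈ E, ((if x = y then 2 * q ^ (d - 1) else 0) + q ^ (d / 2))
            = 2 * q ^ (d - 1) + (E.card : ℝ) * q ^ (d / 2) := by
          intro x hx
          rw [Finset.sum_add_distrib, Finset.sum_ite_eq E x (fun _ => 2 * q ^ (d - 1)),
            if_pos hx, Finset.sum_const, nsmul_eq_mul]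
        rw [Finset.sum_congr rfl hrow, Finset.sum_const, nsmul_eq_mul]
        ring
    _ ≤ 2 * (q ^ (d - 1) * (E.card : ℝ) + q ^ (d / 2) * (E.card : ℝ) ^ 2) := by
        have h1 : (0:ℝ) ≤ q ^ (d / 2) * (E.card : ℝ) ^ 2 := by positivity
        linarith
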